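/- Define U(ω, C, C) as the sum of three integral sub-vertices U_{ω,C,C} + U_{C,ω,C} + U_{C,C,ω} over the unit square in (u,v), as given by: U_{ω,C,C} = +∫₀¹∫₀¹ e^{(1−u)⟨y∂₃⟩ + u⟨y∂₂⟩}[2 + (1−v)⟨∂₁∂₃⟩ + v⟨∂₁∂₂⟩](ϖ₁, C₂, C₃), U_{C,ω,C} = −∫ e^{(1−v)⟨y∂₁⟩ + v⟨y∂₃⟩}[2 + (1−u)⟨∂₂∂₁⟩ + u⟨∂₂∂₃⟩](ϖ₂, C₁, C₃) − (u↔v term), U_{C,C,ω} = +∫ e^{(1−u)⟨y∂₁⟩ + u⟨y∂₂⟩}[2 + (1−v)⟨∂₃∂₁⟩ + v⟨∂₃∂₂⟩](ϖ₃, C₁, C₂), where ϖ(y) = ϖ_{αβ} y^α y^β is quadratic in y. Then after bringing ϖ to the first slot (C's are even, so reordering only flips signs of the corresponding ⟨∂∂⟩ contractions), the sub-vertices cancel pairwise under the change of variables u↔v, so U(ω,C,C) = 0. -/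

import Mathlib

open MvPolynomial

noncomputable section

/-- The antisymmetric ε-symbol with ε^{01} = 1. -/
def eps : Fin 2 → Fin 2 → ℂ := ![![0, 1], ![-1, 0]]

/-- Spinor variables (y^α, ỹ^{α̇}): undotted ⊕ dotted. -/
abbrev Idx := Fin 2 ⊕ Fin 2

/-- Variables: slot 0 is the output y, slots 1, 2, 3 carry the three arguments. -/
abbrev V4 := Fin 4 × Idx

/-- ⟨y ∂ᵢ⟩ = y^α ∂/∂yᵢ^α. -/
def AngY (i : Fin 4) (p : MvPolynomial V4 ℂ) : MvPolynomial V4 ℂ :=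
  ∑ a : Fin 2, X ((0 : Fin 4), Sum.inl a) * pderiv (i, Sum.inl a) p

/-- ⟨∂ᵢ ∂ⱼ⟩ = ∂ᵢ^α ∂_{jα}. -/
def DD (i j : Fin 4) (p : MvPolynomial V4 ℂ) : MvPolynomial V4 ℂ :=
  ∑ a : Fin 2, ∑ b : Fin 2, eps a b • pderiv (i, Sum.inl b) (pderiv (j, Sum.inl a) p)

/-- Exponential of a locally nilpotent operator applied to a polynomial
(the series truncates at the total degree). -/
def expA (D : MvPolynomial V4 ℂ → MvPolynomial V4 ℂ) (p : MvPolynomial V4 ℂ) :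
    MvPolynomial V4 ℂ :=
  ∑ k ∈ Finset.range (p.totalDegree + 1), ((k.factorial : ℂ))⁻¹ • D^[k] p

/-- Place three arguments into the slots 1, 2, 3. -/
def put (f1 f2 f3 : MvPolynomial Idx ℂ) : MvPolynomial V4 ℂ :=
  rename (fun v => ((1 : Fin 4), v)) f1 * rename (fun v => ((2 : Fin 4), v)) f2 *
    rename (fun v => ((3 : Fin 4), v)) f3

/-- Set the auxiliary variables yᵢ = 0 (i = 1,2,3), keeping the output variables. -/
def setz (p : MvPolynomial V4 ℂ) : MvPolynomial Idx ℂ :=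
  aeval (fun v : V4 => if v.1 = 0 then X v.2 else 0) p

/-- Sub-vertex U_{ω,C,C}: e^{(1−u)⟨y∂₃⟩+u⟨y∂₂⟩}[2+(1−v)⟨∂₁∂₃⟩+v⟨∂₁∂₂⟩](ϖ₁,C₂,C₃). -/
def subU1 (ϖ Ca Cb : MvPolynomial Idx ℂ) (u v : ℝ) : MvPolynomial Idx ℂ :=
  setz (expA (fun p => ((1 - u : ℝ) : ℂ) • AngY 3 p + ((u : ℝ) : ℂ) • AngY 2 p)
    ((2 : ℂ) • put ϖ Ca Cb + ((1 - v : ℝ) : ℂ) • DD 1 3 (put ϖ Ca Cb)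
      + ((v : ℝ) : ℂ) • DD 1 2 (put ϖ Ca Cb)))

/-- First sub-vertex of U_{C,ω,C}:
e^{(1−v)⟨y∂₁⟩+v⟨y∂₃⟩}[2+(1−u)⟨∂₂∂₁⟩+u⟨∂₂∂₃⟩](ϖ₂,C₁,C₃). -/
def subU2 (ϖ Ca Cb : MvPolynomial Idx ℂ) (u v : ℝ) : MvPolynomial Idx ℂ :=
  setz (expA (fun p => ((1 - v : ℝ) : ℂ) • AngY 1 p + ((v : ℝ) : ℂ) • AngY 3 p)
    ((2 : ℂ) • put Ca ϖ Cb + ((1 - u : ℝ) : ℂ) • DD 2 1 (put Ca ϖ Cb)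
      + ((u : ℝ) : ℂ) • DD 2 3 (put Ca ϖ Cb)))

/-- Sub-vertex U_{C,C,ω}: e^{(1−u)⟨y∂₁⟩+u⟨y∂₂⟩}[2+(1−v)⟨∂₃∂₁⟩+v⟨∂₃∂₂⟩](ϖ₃,C₁,C₂). -/
def subU3 (ϖ Ca Cb : MvPolynomial Idx ℂ) (u v : ℝ) : MvPolynomial Idx ℂ :=
  setz (expA (fun p => ((1 - u : ℝ) : ℂ) • AngY 1 p + ((u : ℝ) : ℂ) • AngY 2 p)
    ((2 : ℂ) • put Ca Cb ϖ + ((1 - v : ℝ) : ℂ) • DD 3 1 (put Ca Cb ϖ)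
      + ((v : ℝ) : ℂ) • DD 3 2 (put Ca Cb ϖ)))


-- permutation machinery
def E (σ : Equiv.Perm (Fin 4)) : V4 ≃ V4 := σ.prodCongr (Equiv.refl Idx)

lemma E_apply (σ : Equiv.Perm (Fin 4)) (x : V4) : E σ x = (σ x.1, x.2) := rfl

lemma AngY_rename (σ : Equiv.Perm (Fin 4)) (h0 : σ 0 = 0) (i : Fin 4)
    (p : MvPolynomial V4 ℂ) :
    AngY (σ i) (rename (E σ) p) = rename (E σ) (AngY i p) := by
  unfold AngY
  rw [map_sum]
  refine Finset.sum_congr rfl fun a _ => ?_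
  have h1 : ((σ i, Sum.inl a) : V4) = E σ (i, Sum.inl a) := rfl
  rw [h1, pderiv_rename (E σ).injective, map_mul, rename_X]
  congr 1
  simp [E_apply, h0]

lemma DD_rename (σ : Equiv.Perm (Fin 4)) (i j : Fin 4) (p : MvPolynomial V4 ℂ) :
    DD (σ i) (σ j) (rename (E σ) p) = rename (E σ) (DD i j p) := by
  unfold DD
  rw [map_sum]
  refine Finset.sum_congr rfl fun a _ => ?_
  rw [map_sum]
  refine Finset.sum_congr rfl fun b _ => ?_
  have h1 : ((σ i, Sum.inl b) : V4) = E σ (i, Sum.inl b) := rfl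
  have h2 : ((σ j, Sum.inl a) : V4) = E σ (j, Sum.inl a) := rfl
  rw [h1, h2, pderiv_rename (E σ).injective, pderiv_rename (E σ).injective,
    map_smul (rename (E σ))]

lemma totalDegree_rename_equiv (e : V4 ≃ V4) (p : MvPolynomial V4 ℂ) :
    (rename (⇑e) p).totalDegree = p.totalDegree := by
  refine le_antisymm (totalDegree_rename_le _ _) ?_
  have : p = rename (⇑e.symm) (rename (⇑e) p) := by
    rw [rename_rename]; simp
  conv_lhs => rw [this]
  exact totalDegree_rename_le _ _

lemma expA_rename (e : V4 ≃ V4) (D D' : MvPolynomial V4 ℂ → MvPolynomial V4 ℂ)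
    (h : ∀ q, D' (rename (⇑e) q) = rename (⇑e) (D q)) (p : MvPolynomial V4 ℂ) :
    expA D' (rename (⇑e) p) = rename (⇑e) (expA D p) := by
  have hiter : ∀ k q, D'^[k] (rename (⇑e) q) = rename (⇑e) (D^[k] q) := by
    intro k
    induction k with
    | zero => intro q; simp
    | succ n ih => intro q; rw [Function.iterate_succ_apply, Function.iterate_succ_apply, h, ih]
  unfold expA
  rw [totalDegree_rename_equiv, map_sum]
  refine Finset.sum_congr rfl fun k _ => ?_
  rw [hiter, map_smul (rename (⇑e))]

lemma setz_rename (σ : Equiv.Perm (Fin 4)) (h0 : σ 0 = 0) (p : MvPolynomial V4 ℂ) :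
    setz (rename (E σ) p) = setz p := by
  unfold setz
  rw [aeval_rename]
  have hfn : ((fun v : V4 => if v.1 = 0 then (X v.2 : MvPolynomial Idx ℂ) else 0) ∘ ⇑(E σ))
      = fun v : V4 => if v.1 = 0 then (X v.2 : MvPolynomial Idx ℂ) else 0 := by
    funext x
    have : σ x.1 = 0 ↔ x.1 = 0 := by
      constructor
      · intro hx; exact σ.injective (by rw [hx, h0])
      · intro hx; rw [hx, h0]
    simp [Function.comp, E_apply, this]
  rw [hfn]
lemma put_rename (σ : Equiv.Perm (Fin 4)) (f1 f2 f3 : MvPolynomial Idx ℂ) :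
    rename (E σ) (put f1 f2 f3) =
      rename (fun v => ((σ 1 : Fin 4), v)) f1 * rename (fun v => ((σ 2 : Fin 4), v)) f2 *
        rename (fun v => ((σ 3 : Fin 4), v)) f3 := by
  unfold put
  rw [map_mul, map_mul, rename_rename, rename_rename, rename_rename]
  rfl

lemma put_swap12 (f1 f2 f3 : MvPolynomial Idx ℂ) :
    rename (E (Equiv.swap 1 2)) (put f1 f2 f3) = put f2 f1 f3 := by
  rw [put_rename]
  have h1 : (Equiv.swap (1 : Fin 4) 2) 1 = 2 := Equiv.swap_apply_left 1 2
  have h2 : (Equiv.swap (1 : Fin 4) 2) 2 = 1 := Equiv.swap_apply_right 1 2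
  have h3 : (Equiv.swap (1 : Fin 4) 2) 3 = 3 := Equiv.swap_apply_of_ne_of_ne (by decide) (by decide)
  rw [h1, h2, h3]
  unfold put
  ring

lemma put_swap23 (f1 f2 f3 : MvPolynomial Idx ℂ) :
    rename (E (Equiv.swap 2 3)) (put f1 f2 f3) = put f1 f3 f2 := by
  rw [put_rename]
  have h1 : (Equiv.swap (2 : Fin 4) 3) 1 = 1 := Equiv.swap_apply_of_ne_of_ne (by decide) (by decide)
  have h2 : (Equiv.swap (2 : Fin 4) 3) 2 = 3 := Equiv.swap_apply_left 2 3
  have h3 : (Equiv.swap (2 : Fin 4) 3) 3 = 2 := Equiv.swap_apply_right 2 3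
  rw [h1, h2, h3]
  unfold put
  ring

lemma subU3_eq (ϖ Ca Cb : MvPolynomial Idx ℂ) (u v : ℝ) :
    subU3 ϖ Ca Cb u v = subU2 ϖ Ca Cb v u := by
  unfold subU2 subU3
  set σ : Equiv.Perm (Fin 4) := Equiv.swap 2 3 with hσ
  have h0 : σ 0 = 0 := Equiv.swap_apply_of_ne_of_ne (by decide) (by decide)
  have h1 : σ 1 = 1 := Equiv.swap_apply_of_ne_of_ne (by decide) (by decide)
  have h2 : σ 2 = 3 := Equiv.swap_apply_left 2 3
  have h3 : σ 3 = 2 := Equiv.swap_apply_right 2 3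
  have hput : put Ca ϖ Cb = rename (E σ) (put Ca Cb ϖ) := by
    rw [hσ, put_swap23]
  have harg : (2 : ℂ) • put Ca ϖ Cb + ((1 - v : ℝ) : ℂ) • DD 2 1 (put Ca ϖ Cb)
      + ((v : ℝ) : ℂ) • DD 2 3 (put Ca ϖ Cb)
      = rename (E σ) ((2 : ℂ) • put Ca Cb ϖ + ((1 - v : ℝ) : ℂ) • DD 3 1 (put Ca Cb ϖ)
      + ((v : ℝ) : ℂ) • DD 3 2 (put Ca Cb ϖ)) := by
    rw [map_add, map_add, map_smul (rename (E σ)), map_smul (rename (E σ)),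
      map_smul (rename (E σ)), ← DD_rename σ 3 1, ← DD_rename σ 3 2, h1, h2, h3, ← hput]
  rw [harg]
  have hcomm : ∀ q, ((1 - u : ℝ) : ℂ) • AngY 1 (rename (⇑(E σ)) q) + ((u : ℝ) : ℂ) • AngY 3 (rename (⇑(E σ)) q)
      = rename (⇑(E σ)) (((1 - u : ℝ) : ℂ) • AngY 1 q + ((u : ℝ) : ℂ) • AngY 2 q) := by
    intro q
    rw [map_add, map_smul (rename (⇑(E σ))), map_smul (rename (⇑(E σ))),
      ← AngY_rename σ h0 1, ← AngY_rename σ h0 2, h1, h2]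
  rw [expA_rename (E σ) (fun p => ((1 - u : ℝ) : ℂ) • AngY 1 p + ((u : ℝ) : ℂ) • AngY 2 p)
    _ hcomm]
  rw [setz_rename σ h0]

lemma subU1_eq (ϖ Ca Cb : MvPolynomial Idx ℂ) (u v : ℝ) :
    subU1 ϖ Ca Cb u v = subU2 ϖ Ca Cb (1 - v) (1 - u) := by
  unfold subU1 subU2
  set σ : Equiv.Perm (Fin 4) := Equiv.swap 1 2 with hσ
  have h0 : σ 0 = 0 := Equiv.swap_apply_of_ne_of_ne (by decide) (by decide)
  have h1 : σ 1 = 2 := Equiv.swap_apply_left 1 2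
  have h2 : σ 2 = 1 := Equiv.swap_apply_right 1 2
  have h3 : σ 3 = 3 := Equiv.swap_apply_of_ne_of_ne (by decide) (by decide)
  have hcu : ((1 - (1 - u) : ℝ) : ℂ) = ((u : ℝ) : ℂ) := by norm_num
  have hcv : ((1 - (1 - v) : ℝ) : ℂ) = ((v : ℝ) : ℂ) := by norm_num
  have hput : put Ca ϖ Cb = rename (E σ) (put ϖ Ca Cb) := by
    rw [hσ, put_swap12]
  have harg : (2 : ℂ) • put Ca ϖ Cb + ((1 - (1 - v) : ℝ) : ℂ) • DD 2 1 (put Ca ϖ Cb)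
      + (((1 - v) : ℝ) : ℂ) • DD 2 3 (put Ca ϖ Cb)
      = rename (E σ) ((2 : ℂ) • put ϖ Ca Cb + ((1 - v : ℝ) : ℂ) • DD 1 3 (put ϖ Ca Cb)
      + ((v : ℝ) : ℂ) • DD 1 2 (put ϖ Ca Cb)) := by
    rw [hcv, map_add, map_add, map_smul (rename (E σ)), map_smul (rename (E σ)),
      map_smul (rename (E σ)), ← DD_rename σ 1 3, ← DD_rename σ 1 2, h1, h2, h3, ← hput]
    ring
  rw [harg]
  have hcomm : ∀ q, ((1 - (1 - u) : ℝ) : ℂ) • AngY 1 (rename (⇑(E σ)) q)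
        + (((1 - u) : ℝ) : ℂ) • AngY 3 (rename (⇑(E σ)) q)
      = rename (⇑(E σ)) (((1 - u : ℝ) : ℂ) • AngY 3 q + ((u : ℝ) : ℂ) • AngY 2 q) := by
    intro q
    rw [hcu, map_add, map_smul (rename (⇑(E σ))), map_smul (rename (⇑(E σ))),
      ← AngY_rename σ h0 3, ← AngY_rename σ h0 2, h3, h2]
    ring
  rw [expA_rename (E σ) (fun p => ((1 - u : ℝ) : ℂ) • AngY 3 p + ((u : ℝ) : ℂ) • AngY 2 p)
    _ hcomm]
  rw [setz_rename σ h0]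

-- Linearity of AngY, bundled endomorphisms
lemma AngY_add (i : Fin 4) (p q : MvPolynomial V4 ℂ) :
    AngY i (p + q) = AngY i p + AngY i q := by
  unfold AngY
  rw [← Finset.sum_add_distrib]
  refine Finset.sum_congr rfl fun a _ => ?_
  rw [map_add, mul_add]

lemma AngY_smul (i : Fin 4) (c : ℂ) (p : MvPolynomial V4 ℂ) :
    AngY i (c • p) = c • AngY i p := by
  unfold AngY
  rw [Finset.smul_sum]
  refine Finset.sum_congr rfl fun a _ => ?_
  rw [(pderiv (i, Sum.inl a)).map_smul, mul_smul_comm]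

def AngL (i : Fin 4) : Module.End ℂ (MvPolynomial V4 ℂ) where
  toFun := AngY i
  map_add' := AngY_add i
  map_smul' := AngY_smul i

@[simp] lemma AngL_apply (i : Fin 4) (p : MvPolynomial V4 ℂ) : AngL i p = AngY i p := rfl

lemma AngY_zero (i : Fin 4) : AngY i 0 = 0 := map_zero (AngL i)

-- commutation
lemma pderiv_pderiv_comm {x y : V4} (h : x ≠ y) (p : MvPolynomial V4 ℂ) :
    pderiv x (pderiv y p) = pderiv y (pderiv x p) := by
  induction p using MvPolynomial.induction_on' with
  | monomial s a =>
    rw [pderiv_monomial, pderiv_monomial, pderiv_monomial, pderiv_monomial]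
    have hx : ((s - Finsupp.single y 1 : V4 →₀ ℕ)) x = s x := by
      rw [Finsupp.tsub_apply, Finsupp.single_apply, if_neg (by simpa using (Ne.symm h))]
      simp
    have hy : ((s - Finsupp.single x 1 : V4 →₀ ℕ)) y = s y := by
      rw [Finsupp.tsub_apply, Finsupp.single_apply, if_neg (by simpa using h)]
      simp
    rw [hx, hy, tsub_right_comm]
    ring_nf
  | add p q hp hq => rw [map_add, map_add, hp, hq, map_add, map_add]

lemma AngY_comm {i j : Fin 4} (hi : i ≠ 0) (hj : j ≠ 0) (hij : i ≠ j)
    (p : MvPolynomial V4 ℂ) : AngY i (AngY j p) = AngY j (AngY i p) := by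
  have key : ∀ (i' j' : Fin 4), i' ≠ 0 → ∀ (a b : Fin 2) (q : MvPolynomial V4 ℂ),
      pderiv ((i', Sum.inl a) : V4) (X ((0 : Fin 4), Sum.inl b) * q)
      = X ((0 : Fin 4), Sum.inl b) * pderiv ((i', Sum.inl a) : V4) q := by
    intro i' j' hi' a b q
    rw [pderiv_mul, pderiv_X_of_ne (fun hE => hi' (congrArg Prod.fst hE).symm)]
    ring
  unfold AngY
  calc (∑ a : Fin 2, X ((0 : Fin 4), Sum.inl a) *
        pderiv ((i, Sum.inl a) : V4) (∑ b : Fin 2, X ((0 : Fin 4), Sum.inl b) *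
          pderiv ((j, Sum.inl b) : V4) p))
      = ∑ a : Fin 2, ∑ b : Fin 2, X ((0 : Fin 4), Sum.inl a) * (X ((0 : Fin 4), Sum.inl b) *
          pderiv ((i, Sum.inl a) : V4) (pderiv ((j, Sum.inl b) : V4) p)) := by
        refine Finset.sum_congr rfl fun a _ => ?_
        rw [map_sum, Finset.mul_sum]
        exact Finset.sum_congr rfl fun b _ => by rw [key i j hi a b]
    _ = ∑ b : Fin 2, ∑ a : Fin 2, X ((0 : Fin 4), Sum.inl b) * (X ((0 : Fin 4), Sum.inl a) *
          pderiv ((j, Sum.inl b) : V4) (pderiv ((i, Sum.inl a) : V4) p)) := by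
        rw [Finset.sum_comm]
        refine Finset.sum_congr rfl fun b _ => Finset.sum_congr rfl fun a _ => ?_
        rw [pderiv_pderiv_comm (fun hE => hij (Prod.ext_iff.mp hE).1)]
        ring
    _ = ∑ b : Fin 2, X ((0 : Fin 4), Sum.inl b) *
        pderiv ((j, Sum.inl b) : V4) (∑ a : Fin 2, X ((0 : Fin 4), Sum.inl a) *
          pderiv ((i, Sum.inl a) : V4) p) := by
        refine Finset.sum_congr rfl fun b _ => ?_
        rw [map_sum, Finset.mul_sum]
        exact Finset.sum_congr rfl fun a _ => by rw [key j i hj b a]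

lemma Commute_AngL : Commute (AngL 1) (AngL 3) := by
  apply LinearMap.ext
  intro p
  exact AngY_comm (by decide) (by decide) (by decide) p

-- weight of a monomial: total degree in the non-output slots
def W (m : V4 →₀ ℕ) : ℕ := m.sum fun x e => if x.1 = 0 then 0 else e

lemma W_add (m1 m2 : V4 →₀ ℕ) : W (m1 + m2) = W m1 + W m2 := by
  unfold W
  apply Finsupp.sum_add_index
  · intro a _; simp
  · intro a _ b1 b2; split_ifs <;> simp

lemma W_single (x : V4) (e : ℕ) : W (Finsupp.single x e) = if x.1 = 0 then 0 else e := by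
  unfold W
  rw [Finsupp.sum_single_index]
  simp

lemma W_le_degree (m : V4 →₀ ℕ) : W m ≤ m.sum fun _ e => e := by
  unfold W Finsupp.sum
  apply Finset.sum_le_sum
  intro x _
  dsimp only
  split_ifs <;> simp

/-- `Pred n q`: every monomial of `q` has weight at most `n`. -/
def Pred (n : ℕ) (q : MvPolynomial V4 ℂ) : Prop := ∀ m ∈ q.support, W m ≤ n

lemma Pred_totalDegree (q : MvPolynomial V4 ℂ) : Pred q.totalDegree q :=
  fun m hm => le_trans (W_le_degree m) (le_totalDegree hm)

lemma pderiv_support {v : V4} {q : MvPolynomial V4 ℂ} {m : V4 →₀ ℕ}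
    (hm : m ∈ (pderiv v q).support) :
    ∃ s ∈ q.support, s v ≠ 0 ∧ m = s - Finsupp.single v 1 := by
  classical
  have hq : pderiv v q = ∑ s ∈ q.support, monomial (s - Finsupp.single v 1) (coeff s q * s v) := by
    conv_lhs => rw [q.as_sum]
    rw [map_sum]
    exact Finset.sum_congr rfl fun s _ => pderiv_monomial
  rw [hq] at hm
  obtain ⟨s, hs, hms⟩ := Finset.mem_biUnion.mp (MvPolynomial.support_sum hm)
  rw [support_monomial] at hms
  by_cases hc : coeff s q * s v = 0
  · rw [if_pos hc] at hms; exact absurd hms (Finset.notMem_empty m)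
  · rw [if_neg hc] at hms
    refine ⟨s, hs, fun h0 => hc (by rw [h0]; ring), Finset.mem_singleton.mp hms⟩

lemma Pred_AngY {i : Fin 4} (hi : i ≠ 0) {n : ℕ} {q : MvPolynomial V4 ℂ}
    (h : Pred (n + 1) q) : Pred n (AngY i q) := by
  intro m hm
  unfold AngY at hm
  obtain ⟨a, _, hma⟩ := Finset.mem_biUnion.mp (MvPolynomial.support_sum hm)
  rw [support_X_mul] at hma
  obtain ⟨m', hm', hmm⟩ := Finset.mem_map.mp hma
  obtain ⟨s, hs, hsv, hms⟩ := pderiv_support hm'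
  have hle : Finsupp.single ((i, Sum.inl a) : V4) 1 ≤ s := by
    rw [Finsupp.single_le_iff]
    omega
  have hWs : W s = W m' + 1 := by
    have : s = m' + Finsupp.single ((i, Sum.inl a) : V4) 1 := by
      rw [hms, tsub_add_cancel_of_le hle]
    rw [this, W_add, W_single]
    simp [hi]
  have hWm : W m = W m' := by
    rw [← hmm, addLeftEmbedding_apply, W_add, W_single]
    simp
  have := h s hs
  omega

lemma Pred_zero_AngY {i : Fin 4} (hi : i ≠ 0) {q : MvPolynomial V4 ℂ}
    (h : Pred 0 q) : AngY i q = 0 := by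
  unfold AngY
  refine Finset.sum_eq_zero fun a _ => ?_
  have : pderiv ((i, Sum.inl a) : V4) q = 0 := by
    apply pderiv_eq_zero_of_notMem_vars
    intro hv
    obtain ⟨m, hm, hx⟩ := mem_vars _ |>.mp hv
    have hW := h m hm
    have hx' : m (i, Sum.inl a) ≠ 0 := Finsupp.mem_support_iff.mp hx
    have h1 : (if ((i, Sum.inl a) : V4).1 = 0 then 0 else m (i, Sum.inl a))
        ≤ m.sum fun x e => if x.1 = 0 then 0 else e := by
      unfold Finsupp.sum
      exact Finset.single_le_sum (f := fun x => if x.1 = 0 then (0:ℕ) else m x)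
        (fun x _ => Nat.zero_le _) hx
    rw [if_neg hi] at h1
    unfold W at hW
    exact hx' (Nat.eq_zero_of_le_zero (le_trans h1 hW))
  rw [this, mul_zero]

lemma AngY_iter_zero (i : Fin 4) (k : ℕ) : (AngY i)^[k] 0 = 0 :=
  Function.iterate_fixed (AngY_zero i) k

lemma chain_nil : ∀ (n : ℕ) (q : MvPolynomial V4 ℂ), Pred n q → ∀ k l, n < k + l →
    (AngY 1)^[k] ((AngY 3)^[l] q) = 0 := by
  intro n
  induction n with
  | zero =>
    intro q hq k l hkl
    rcases l with _ | l'
    · rcases k with _ | k'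
      · omega
      · simp only [Function.iterate_zero, id_eq]
        rw [Function.iterate_succ_apply, Pred_zero_AngY (by decide) hq, AngY_iter_zero]
    · rw [Function.iterate_succ_apply, Pred_zero_AngY (by decide) hq, AngY_iter_zero,
        AngY_iter_zero]
  | succ n ih =>
    intro q hq k l hkl
    rcases l with _ | l'
    · rcases k with _ | k'
      · omega
      · simp only [Function.iterate_zero, id_eq]
        rw [Function.iterate_succ_apply]
        have := ih (AngY 1 q) (Pred_AngY (by decide) hq) k' 0 (by omega)
        simpa using this
    · rw [Function.iterate_succ_apply]
      exact ih (AngY 3 q) (Pred_AngY (by decide) hq) k l' (by omega)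

/-- Binomial expansion of powers of `c1 • ⟨y∂₁⟩ + c3 • ⟨y∂₃⟩`. -/
lemma Tpow_apply (c1 c3 : ℂ) (k : ℕ) (q : MvPolynomial V4 ℂ) :
    ((c1 • AngL 1 + c3 • AngL 3) ^ k) q
      = ∑ m ∈ Finset.range (k + 1),
          (c1 ^ m * c3 ^ (k - m) * (k.choose m : ℂ)) • (AngY 1)^[m] ((AngY 3)^[k - m] q) := by
  have hcomm : Commute (c1 • AngL 1) (c3 • AngL 3) :=
    (Commute_AngL.smul_left c1).smul_right c3
  rw [hcomm.add_pow]
  rw [LinearMap.sum_apply]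
  refine Finset.sum_congr rfl fun m _ => ?_
  rw [smul_pow, smul_pow]
  have : ∀ (r : MvPolynomial V4 ℂ), ((AngL 1 ^ m) r) = (AngY 1)^[m] r := fun r =>
    Module.End.pow_apply _ _ _
  have h3 : ∀ (r : MvPolynomial V4 ℂ), ((AngL 3 ^ (k - m)) r) = (AngY 3)^[k - m] r := fun r =>
    Module.End.pow_apply _ _ _
  rw [Module.End.mul_apply, Module.End.mul_apply, Module.End.natCast_apply,
    LinearMap.smul_apply, LinearMap.smul_apply, map_smul, map_nsmul, map_nsmul, this, h3,
    ← Nat.cast_smul_eq_nsmul ℂ, smul_smul, smul_smul]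

/-- The evolution operator is locally nilpotent. -/
lemma Dv_nil (c1 c3 : ℂ) (q : MvPolynomial V4 ℂ) (k : ℕ) (h : q.totalDegree < k) :
    (fun p => c1 • AngY 1 p + c3 • AngY 3 p)^[k] q = 0 := by
  have hfun : (fun p => c1 • AngY 1 p + c3 • AngY 3 p) = ⇑(c1 • AngL 1 + c3 • AngL 3) := by
    funext p; simp
  rw [hfun, ← Module.End.pow_apply, Tpow_apply]
  refine Finset.sum_eq_zero fun m hm => ?_
  rw [Finset.mem_range] at hm
  have : (AngY 1)^[m] ((AngY 3)^[k - m] q) = 0 := by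
    apply chain_nil q.totalDegree q (Pred_totalDegree q)
    omega
  rw [this, smul_zero]

lemma Dv_iter (c1 c3 : ℂ) (k : ℕ) (q : MvPolynomial V4 ℂ) :
    (fun p => c1 • AngY 1 p + c3 • AngY 3 p)^[k] q = ((c1 • AngL 1 + c3 • AngL 3) ^ k) q := by
  have hfun : (fun p => c1 • AngY 1 p + c3 • AngY 3 p) = ⇑(c1 • AngL 1 + c3 • AngL 3) := by
    funext p; simp
  rw [hfun, ← Module.End.pow_apply]

lemma expA_eq_of_le (c1 c3 : ℂ) (q : MvPolynomial V4 ℂ) (M : ℕ) (h : q.totalDegree ≤ M) :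
    expA (fun p => c1 • AngY 1 p + c3 • AngY 3 p) q
      = ∑ k ∈ Finset.range (M + 1),
          (k.factorial : ℂ)⁻¹ • (fun p => c1 • AngY 1 p + c3 • AngY 3 p)^[k] q := by
  unfold expA
  apply Finset.sum_subset (Finset.range_subset_range.mpr (by omega))
  intro k hk1 hk2
  rw [Finset.mem_range] at hk1 hk2
  rw [Dv_nil c1 c3 q k (by omega), smul_zero]

/-- evaluation at `w` after setting auxiliary variables to zero, as a linear functional -/
def LW (w : Idx → ℂ) : MvPolynomial V4 ℂ →ₗ[ℂ] ℂ :=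
  ((aeval w : MvPolynomial Idx ℂ →ₐ[ℂ] ℂ).comp
    (aeval (fun v : V4 => if v.1 = 0 then (X v.2 : MvPolynomial Idx ℂ) else 0) :
      MvPolynomial V4 ℂ →ₐ[ℂ] MvPolynomial Idx ℂ)).toLinearMap

lemma LW_eq (w : Idx → ℂ) (p : MvPolynomial V4 ℂ) : eval w (setz p) = LW w p := by
  unfold LW setz
  have : eval w = fun q : MvPolynomial Idx ℂ => aeval w q := by
    funext q
    rw [aeval_eq_eval₂Hom, Algebra.algebraMap_self]
    rfl
  rw [this]
  rfl

lemma subU2_expansion (ϖ Ca Cb : MvPolynomial Idx ℂ) (w : Idx → ℂ) :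
    ∃ (M : ℕ) (A B : ℕ → ℕ → ℂ), ∀ u v : ℝ,
      eval w (subU2 ϖ Ca Cb u v)
        = ∑ k ∈ Finset.range (M + 1), ∑ m ∈ Finset.range (k + 1),
            ((1 - v : ℝ) : ℂ) ^ m * ((v : ℝ) : ℂ) ^ (k - m) * (A k m + (u : ℝ) * B k m) := by
  classical
  set P : MvPolynomial V4 ℂ := put Ca ϖ Cb with hP
  set R0 : MvPolynomial V4 ℂ := (2 : ℂ) • P + DD 2 1 P with hR0
  set R1 : MvPolynomial V4 ℂ := DD 2 3 P - DD 2 1 P with hR1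
  set M : ℕ := max R0.totalDegree R1.totalDegree with hM
  refine ⟨M,
    fun k m => (k.factorial : ℂ)⁻¹ * (k.choose m : ℂ) * LW w ((AngY 1)^[m] ((AngY 3)^[k - m] R0)),
    fun k m => (k.factorial : ℂ)⁻¹ * (k.choose m : ℂ) * LW w ((AngY 1)^[m] ((AngY 3)^[k - m] R1)),
    fun u v => ?_⟩
  set c1 : ℂ := ((1 - v : ℝ) : ℂ) with hc1
  set c3 : ℂ := ((v : ℝ) : ℂ) with hc3
  set cu : ℂ := ((u : ℝ) : ℂ) with hcu
  have harg : (2 : ℂ) • P + ((1 - u : ℝ) : ℂ) • DD 2 1 P + ((u : ℝ) : ℂ) • DD 2 3 P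
      = R0 + cu • R1 := by
    have hcast : ((1 - u : ℝ) : ℂ) = 1 - cu := by push_cast; ring
    rw [hcast, hR0, hR1, sub_smul, one_smul, smul_sub]
    abel
  have hdeg : (R0 + cu • R1).totalDegree ≤ M := by
    refine le_trans (totalDegree_add _ _) (max_le (le_max_left _ _) ?_)
    exact le_trans (totalDegree_smul_le _ _) (le_max_right _ _)
  unfold subU2
  rw [← hP, harg, LW_eq, expA_eq_of_le c1 c3 _ M hdeg, map_sum]
  refine Finset.sum_congr rfl fun k _ => ?_
  rw [Dv_iter, map_add, (((c1 • AngL 1 + c3 • AngL 3) ^ k)).map_smul, Tpow_apply, Tpow_apply]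
  simp only [map_add, map_sum, map_smul, smul_eq_mul, mul_add, Finset.mul_sum]
  rw [← Finset.sum_add_distrib]
  refine Finset.sum_congr rfl fun m _ => ?_
  push_cast
  ring

lemma int_affine (α β : ℂ) :
    ∫ x in (0:ℝ)..1, (α + ((x : ℝ) : ℂ) * β) = α + (1/2 : ℂ) * β := by
  have hx : (fun x : ℝ => ((x : ℝ) : ℂ) * β) = fun x : ℝ => x • β := by
    funext x; rw [Complex.real_smul]
  rw [intervalIntegral.integral_add intervalIntegrable_const
    (Continuous.intervalIntegrable (by fun_prop) _ _), intervalIntegral.integral_const, hx,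
    intervalIntegral.integral_smul_const, integral_id]
  norm_num [Complex.real_smul]

lemma int_affine' (α β : ℂ) :
    ∫ x in (0:ℝ)..1, (α + ((1 - x : ℝ) : ℂ) * β) = α + (1/2 : ℂ) * β := by
  have h := intervalIntegral.integral_comp_sub_left (a := (0:ℝ)) (b := (1:ℝ))
    (fun y : ℝ => α + ((y : ℝ) : ℂ) * β) 1
  norm_num at h
  push_cast
  rw [h, int_affine]

lemma Bint_symm (m l : ℕ) :
    ∫ x in (0:ℝ)..1, ((x : ℝ) : ℂ)^m * ((1 - x : ℝ) : ℂ)^l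
      = ∫ x in (0:ℝ)..1, ((1 - x : ℝ) : ℂ)^m * ((x : ℝ) : ℂ)^l := by
  have h := intervalIntegral.integral_comp_sub_left (a := (0:ℝ)) (b := (1:ℝ))
    (fun y : ℝ => ((y : ℝ) : ℂ)^m * ((1 - y : ℝ) : ℂ)^l) 1
  norm_num [sub_sub_cancel] at h
  push_cast
  rw [← h]

lemma term1 (c α β : ℂ) :
    ∫ v in (0:ℝ)..1, (c * (α + ((1 - v : ℝ) : ℂ) * β)) = c * (α + (1/2 : ℂ) * β) := by
  rw [intervalIntegral.integral_const_mul, int_affine']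

lemma term2 (m l : ℕ) (c : ℂ) :
    ∫ v in (0:ℝ)..1, (((1 - v : ℝ) : ℂ)^m * ((v : ℝ) : ℂ)^l * c)
      = (∫ x in (0:ℝ)..1, ((1 - x : ℝ) : ℂ)^m * ((x : ℝ) : ℂ)^l) * c :=
  intervalIntegral.integral_mul_const _ _

lemma term3 (m l : ℕ) (c : ℂ) :
    ∫ u in (0:ℝ)..1, (((u : ℝ) : ℂ)^m * ((1 - u : ℝ) : ℂ)^l * c)
      = (∫ x in (0:ℝ)..1, ((1 - x : ℝ) : ℂ)^m * ((x : ℝ) : ℂ)^l) * c := by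
  rw [intervalIntegral.integral_mul_const, Bint_symm]

lemma term4 (c α β : ℂ) :
    ∫ u in (0:ℝ)..1, (c * (α + ((u : ℝ) : ℂ) * β)) = c * (α + (1/2 : ℂ) * β) := by
  rw [intervalIntegral.integral_const_mul, int_affine]


/-- The cubic vertex U(ω,C,C) = U_{ω,C,C} + U_{C,ω,C} + U_{C,C,ω} vanishes on a
Lorentz spin connection ϖ(y) = ϖ_{αβ} y^α y^β: after reordering, the sub-vertices
cancel pairwise under u↔v, so U(ω,C,C) = 0 (evaluated at any point w). -/
theorem cubic_vertex_on_spin_connection_vanishes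
    (ϖ Ca Cb : MvPolynomial Idx ℂ)
    (hϖ : ∃ Mat : Fin 2 → Fin 2 → ℂ,
      ϖ = ∑ a : Fin 2, ∑ b : Fin 2, C (Mat a b) * (X (Sum.inl a) * X (Sum.inl b))) :
    ∀ w : Idx → ℂ,
      (∫ u in (0:ℝ)..1, ∫ v in (0:ℝ)..1,
        (eval w (subU1 ϖ Ca Cb u v)
          - eval w (subU2 ϖ Ca Cb u v)
          - eval w (subU2 ϖ Ca Cb v u)
          + eval w (subU3 ϖ Ca Cb u v))) = 0 := by
  intro w
  obtain ⟨M, A, B, hG⟩ := subU2_expansion ϖ Ca Cb w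
  have hcast : ∀ x : ℝ, ((1 - (1 - x) : ℝ) : ℂ) = ((x : ℝ) : ℂ) := by
    intro x; push_cast; ring
  have hint : ∀ u v : ℝ,
      eval w (subU1 ϖ Ca Cb u v) - eval w (subU2 ϖ Ca Cb u v)
        - eval w (subU2 ϖ Ca Cb v u) + eval w (subU3 ϖ Ca Cb u v)
      = (∑ k ∈ Finset.range (M+1), ∑ m ∈ Finset.range (k+1),
          ((u : ℝ) : ℂ)^m * ((1 - u : ℝ) : ℂ)^(k-m) * (A k m + ((1 - v : ℝ) : ℂ) * B k m))
        - (∑ k ∈ Finset.range (M+1), ∑ m ∈ Finset.range (k+1),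
          ((1 - v : ℝ) : ℂ)^m * ((v : ℝ) : ℂ)^(k-m) * (A k m + ((u : ℝ) : ℂ) * B k m)) := by
    intro u v
    rw [subU1_eq, subU3_eq, hG u v, hG v u, hG (1-v) (1-u)]
    simp only [hcast]
    ring
  have step1 : (∫ u in (0:ℝ)..1, ∫ v in (0:ℝ)..1,
        (eval w (subU1 ϖ Ca Cb u v) - eval w (subU2 ϖ Ca Cb u v)
          - eval w (subU2 ϖ Ca Cb v u) + eval w (subU3 ϖ Ca Cb u v)))
      = ∫ u in (0:ℝ)..1, ((∑ k ∈ Finset.range (M+1), ∑ m ∈ Finset.range (k+1),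
              ((u : ℝ) : ℂ)^m * ((1 - u : ℝ) : ℂ)^(k-m) * (A k m + (1/2 : ℂ) * B k m))
          - (∑ k ∈ Finset.range (M+1), ∑ m ∈ Finset.range (k+1),
              (∫ x in (0:ℝ)..1, ((1 - x : ℝ) : ℂ)^m * ((x : ℝ) : ℂ)^(k-m))
                * (A k m + ((u : ℝ) : ℂ) * B k m))) := by
    congr 1
    funext u
    have h1 : (∫ v in (0:ℝ)..1,
          (eval w (subU1 ϖ Ca Cb u v) - eval w (subU2 ϖ Ca Cb u v)
            - eval w (subU2 ϖ Ca Cb v u) + eval w (subU3 ϖ Ca Cb u v)))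
        = ∫ v in (0:ℝ)..1,
          ((∑ k ∈ Finset.range (M+1), ∑ m ∈ Finset.range (k+1),
            ((u : ℝ) : ℂ)^m * ((1 - u : ℝ) : ℂ)^(k-m) * (A k m + ((1 - v : ℝ) : ℂ) * B k m))
          - (∑ k ∈ Finset.range (M+1), ∑ m ∈ Finset.range (k+1),
            ((1 - v : ℝ) : ℂ)^m * ((v : ℝ) : ℂ)^(k-m) * (A k m + ((u : ℝ) : ℂ) * B k m))) := by
      congr 1
      funext v
      exact hint u v
    rw [h1, intervalIntegral.integral_sub
      (Continuous.intervalIntegrable (by fun_prop) _ _)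
      (Continuous.intervalIntegrable (by fun_prop) _ _),
      intervalIntegral.integral_finset_sum
        (fun k _ => Continuous.intervalIntegrable (by fun_prop) _ _),
      intervalIntegral.integral_finset_sum
        (fun k _ => Continuous.intervalIntegrable (by fun_prop) _ _)]
    congr 1
    · refine Finset.sum_congr rfl fun k _ => ?_
      rw [intervalIntegral.integral_finset_sum
        (fun m _ => Continuous.intervalIntegrable (by fun_prop) _ _)]
      exact Finset.sum_congr rfl fun m _ => term1 _ _ _
    · refine Finset.sum_congr rfl fun k _ => ?_
      rw [intervalIntegral.integral_finset_sum
        (fun m _ => Continuous.intervalIntegrable (by fun_prop) _ _)]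
      exact Finset.sum_congr rfl fun m _ => term2 _ _ _
  rw [step1, intervalIntegral.integral_sub
      (Continuous.intervalIntegrable (by fun_prop) _ _)
      (Continuous.intervalIntegrable (by fun_prop) _ _),
    intervalIntegral.integral_finset_sum
      (fun k _ => Continuous.intervalIntegrable (by fun_prop) _ _),
    intervalIntegral.integral_finset_sum
      (fun k _ => Continuous.intervalIntegrable (by fun_prop) _ _)]
  rw [sub_eq_zero]
  refine Finset.sum_congr rfl fun k _ => ?_
  rw [intervalIntegral.integral_finset_sum
      (fun m _ => Continuous.intervalIntegrable (by fun_prop) _ _),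
    intervalIntegral.integral_finset_sum
      (fun m _ => Continuous.intervalIntegrable (by fun_prop) _ _)]
  refine Finset.sum_congr rfl fun m _ => ?_
  rw [term3, term4]
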